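/- Let n be even, let U ⊆ 𝔽₂^k be a linear subspace of dimension τ with 0 ≤ τ ≤ k−2, and let a, h₁,…,h_k be Boolean functions on 𝔽₂ⁿ such that a ⊕ ω·(h₁,…,h_k) is a bent function on 𝔽₂ⁿ for every ω ∈ U^⊥. If for every v ∈ 𝔽₂ⁿ the integer ∑_{ω∈U^⊥} (−1)^{(a ⊕ ω·(h₁,…,h_k))*(v)} is divisible by 2^{k−τ}, then 𝔣(x) = a(x) ⊕ φ_U(h₁(x),…,h_k(x)) is a bent function on 𝔽₂ⁿ. -/

import Mathlib

open Finset

def dotp {ι : Type*} [Fintype ι] (a b : ι → ZMod 2) : ZMod 2 := ∑ i, a i * b i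

def WHT {ι : Type*} [Fintype ι] [DecidableEq ι]
    (f : (ι → ZMod 2) → ZMod 2) (ω : ι → ZMod 2) : ℤ :=
  ∑ x : ι → ZMod 2, (-1 : ℤ) ^ ((f x + dotp ω x).val)

def IsBent {ι : Type*} [Fintype ι] [DecidableEq ι] (f : (ι → ZMod 2) → ZMod 2) : Prop :=
  ∀ ω, |WHT f ω| = 2 ^ (Fintype.card ι / 2)

def IsDualBent {ι : Type*} [Fintype ι] [DecidableEq ι] (f g : (ι → ZMod 2) → ZMod 2) : Prop :=
  ∀ ω, WHT f ω = 2 ^ (Fintype.card ι / 2) * (-1 : ℤ) ^ ((g ω).val)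

def IsPlateaued {ι : Type*} [Fintype ι] [DecidableEq ι] (s : ℕ) (f : (ι → ZMod 2) → ZMod 2) : Prop :=
  ∀ ω, WHT f ω = 0 ∨ WHT f ω = 2 ^ ((Fintype.card ι + s) / 2) ∨
    WHT f ω = -(2 ^ ((Fintype.card ι + s) / 2))

def WSupport {ι : Type*} [Fintype ι] [DecidableEq ι] (f : (ι → ZMod 2) → ZMod 2) : Set (ι → ZMod 2) :=
  {ω | WHT f ω ≠ 0}

/-! ### Auxiliary lemmas -/

lemma neg_one_pow_add' (x y : ZMod 2) :
    (-1:ℤ)^((x+y).val) = (-1:ℤ)^x.val * (-1:ℤ)^y.val := by revert x y; decide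

lemma zmod2_ne_zero {x : ZMod 2} (hx : x ≠ 0) : x = 1 := by revert hx; revert x; decide

lemma dotp_comm' {ι : Type*} [Fintype ι] (a b : ι → ZMod 2) : dotp a b = dotp b a := by
  simp [dotp, mul_comm]

lemma dotp_zero_left' {ι : Type*} [Fintype ι] (b : ι → ZMod 2) : dotp 0 b = 0 := by
  simp [dotp]

lemma dotp_zero_right' {ι : Type*} [Fintype ι] (b : ι → ZMod 2) : dotp b 0 = 0 := by
  simp [dotp]

lemma dotp_add_left' {ι : Type*} [Fintype ι] (a b c : ι → ZMod 2) :
    dotp (a + b) c = dotp a c + dotp b c := by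
  simp [dotp, add_mul, Finset.sum_add_distrib]

lemma dotp_add_right' {ι : Type*} [Fintype ι] (a b c : ι → ZMod 2) :
    dotp a (b + c) = dotp a b + dotp a c := by
  simp [dotp, mul_add, Finset.sum_add_distrib]

lemma dotp_apply_single' {ι : Type*} [Fintype ι] [DecidableEq ι]
    (F : (ι → ZMod 2) →ₗ[ZMod 2] ZMod 2) (u : ι → ZMod 2) :
    dotp u (fun i => F (fun j => if i = j then 1 else 0)) = F u := by
  rw [LinearMap.pi_apply_eq_sum_univ F u]
  simp [dotp, smul_eq_mul]

lemma dotp_single_left' {ι : Type*} [Fintype ι] [DecidableEq ι] (i : ι) (z : ι → ZMod 2) :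
    dotp (fun j => if i = j then (1:ZMod 2) else 0) z = z i := by
  simp [dotp, ite_mul]

def phiMap {k : ℕ} (U : Submodule (ZMod 2) (Fin k → ZMod 2)) :
    (Fin k → ZMod 2) →ₗ[ZMod 2] Module.Dual (ZMod 2) U where
  toFun w :=
    { toFun := fun u => dotp (u : Fin k → ZMod 2) w
      map_add' := by
        intro u v
        simp [dotp, add_mul, Finset.sum_add_distrib]
      map_smul' := by
        intro c u
        simp [dotp, Finset.mul_sum, smul_eq_mul, mul_assoc] }
  map_add' := by
    intro w w'
    ext u
    simp [dotp, mul_add, Finset.sum_add_distrib]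
  map_smul' := by
    intro c w
    ext u
    simp [dotp, Finset.mul_sum, smul_eq_mul, mul_left_comm]

lemma phiMap_surjective {k : ℕ} (U : Submodule (ZMod 2) (Fin k → ZMod 2)) :
    Function.Surjective (phiMap U) := by
  intro f
  obtain ⟨F, hF⟩ := LinearMap.exists_extend f
  refine ⟨fun i => F (fun j => if i = j then 1 else 0), ?_⟩
  ext u
  show dotp (u : Fin k → ZMod 2) _ = f u
  rw [dotp_apply_single' F u]
  rw [← hF]; rfl

lemma mem_ker_phiMap {k : ℕ} (U : Submodule (ZMod 2) (Fin k → ZMod 2))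
    (w : Fin k → ZMod 2) :
    w ∈ LinearMap.ker (phiMap U) ↔ ∀ u ∈ U, dotp u w = 0 := by
  constructor
  · intro hw u hu
    have := congrArg (fun g : Module.Dual (ZMod 2) U => g ⟨u, hu⟩) (LinearMap.mem_ker.mp hw)
    exact this
  · intro hw
    rw [LinearMap.mem_ker]
    ext u
    exact hw u.1 u.2

open scoped Classical in
lemma card_perp {k τ : ℕ} (U : Submodule (ZMod 2) (Fin k → ZMod 2))
    (hdim : Module.finrank (ZMod 2) U = τ) (hτk : τ ≤ k) :
    (Finset.univ.filter (fun w : Fin k → ZMod 2 => ∀ u ∈ U, dotp u w = 0)).card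
      = 2 ^ (k - τ) := by
  have hrank : Module.finrank (ZMod 2) (LinearMap.ker (phiMap U)) = k - τ := by
    have h1 := LinearMap.finrank_range_add_finrank_ker (phiMap U)
    have h2 : LinearMap.range (phiMap U) = ⊤ :=
      LinearMap.range_eq_top.mpr (phiMap_surjective U)
    rw [h2] at h1
    have h3 : Module.finrank (ZMod 2) (⊤ : Submodule (ZMod 2) (Module.Dual (ZMod 2) U))
        = τ := by
      rw [finrank_top, Subspace.dual_finrank_eq, hdim]
    rw [h3, Module.finrank_fintype_fun_eq_card, Fintype.card_fin] at h1
    omega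
  have hcard : Fintype.card (LinearMap.ker (phiMap U)) = 2 ^ (k - τ) := by
    rw [Module.card_eq_pow_finrank (K := ZMod 2), hrank, ZMod.card]
  rw [← Fintype.card_subtype]
  rw [← hcard]
  exact Fintype.card_congr (Equiv.subtypeEquivRight fun w => (mem_ker_phiMap U w).symm)

lemma exists_perp_sep {k : ℕ} (U : Submodule (ZMod 2) (Fin k → ZMod 2))
    {z : Fin k → ZMod 2} (hz : z ∉ U) :
    ∃ w : Fin k → ZMod 2, (∀ u ∈ U, dotp u w = 0) ∧ dotp w z = 1 := by
  have hz' : (Submodule.Quotient.mk z : (Fin k → ZMod 2) ⧸ U) ≠ 0 := by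
    simpa [Submodule.Quotient.mk_eq_zero] using hz
  have hex : ∃ φ : Module.Dual (ZMod 2) ((Fin k → ZMod 2) ⧸ U),
      φ (Submodule.Quotient.mk z) ≠ 0 := by
    by_contra hco
    push_neg at hco
    exact hz' ((Module.forall_dual_apply_eq_zero_iff (ZMod 2) _).mp hco)
  obtain ⟨φ, hφ⟩ := hex
  set F := φ.comp U.mkQ with hFdef
  refine ⟨fun i => F (fun j => if i = j then 1 else 0), fun u hu => ?_, ?_⟩
  · rw [dotp_apply_single']
    show φ (U.mkQ u) = 0
    have : U.mkQ u = 0 := (Submodule.Quotient.mk_eq_zero U).mpr hu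
    rw [this, map_zero]
  · rw [dotp_comm', dotp_apply_single']
    exact zmod2_ne_zero hφ

lemma sum_invol_zero {m : ℕ} (s : Finset (Fin m → ZMod 2)) (z w0 : Fin m → ZMod 2)
    (hcl : ∀ w ∈ s, w + w0 ∈ s) (hw0 : dotp w0 z = 1) :
    ∑ w ∈ s, (-1:ℤ)^((dotp w z).val) = 0 := by
  have hself : ∀ x : Fin m → ZMod 2, x + w0 + w0 = x := by
    intro x
    funext i
    have : ∀ a b : ZMod 2, a + b + b = a := by decide
    exact this (x i) (w0 i)
  have key : ∑ w ∈ s, (-1:ℤ)^((dotp w z).val)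
      = ∑ w ∈ s, (-1:ℤ)^((dotp (w + w0) z).val) := by
    refine Finset.sum_nbij' (fun w => w + w0) (fun w => w + w0) ?_ ?_ ?_ ?_ ?_
    · intro w hw; exact hcl w hw
    · intro w hw; exact hcl w hw
    · intro w hw; exact hself w
    · intro w hw; exact hself w
    · intro w hw
      rw [hself w]
  have key2 : ∑ w ∈ s, (-1:ℤ)^((dotp (w + w0) z).val)
      = -∑ w ∈ s, (-1:ℤ)^((dotp w z).val) := by
    rw [← Finset.sum_neg_distrib]
    refine Finset.sum_congr rfl fun w hw => ?_
    rw [dotp_add_left', neg_one_pow_add', hw0]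
    have h1 : ((1:ZMod 2)).val = 1 := rfl
    rw [h1]
    ring
  omega

open scoped Classical in
lemma char_sum_perp {k τ : ℕ} (U : Submodule (ZMod 2) (Fin k → ZMod 2))
    (hdim : Module.finrank (ZMod 2) U = τ) (hτk : τ ≤ k) (z : Fin k → ZMod 2) :
    ∑ w ∈ Finset.univ.filter (fun w : Fin k → ZMod 2 => ∀ u ∈ U, dotp u w = 0),
      (-1:ℤ)^((dotp w z).val)
    = if z ∈ U then (2:ℤ)^(k-τ) else 0 := by
  by_cases hz : z ∈ U
  · rw [if_pos hz]
    have : ∀ w ∈ Finset.univ.filter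
        (fun w : Fin k → ZMod 2 => ∀ u ∈ U, dotp u w = 0),
        (-1:ℤ)^((dotp w z).val) = 1 := by
      intro w hw
      have hw' := (Finset.mem_filter.mp hw).2
      rw [dotp_comm', hw' z hz]
      rfl
    rw [Finset.sum_congr rfl this, Finset.sum_const, card_perp U hdim hτk]
    simp
  · rw [if_neg hz]
    obtain ⟨w0, hw0U, hw0z⟩ := exists_perp_sep U hz
    refine sum_invol_zero _ z w0 ?_ hw0z
    intro w hw
    simp only [Finset.mem_filter, Finset.mem_univ, true_and] at hw ⊢
    intro u hu
    rw [dotp_add_right', hw u hu, hw0U u hu, add_zero]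

lemma char_sum_univ {m : ℕ} (z : Fin m → ZMod 2) :
    ∑ w : Fin m → ZMod 2, (-1:ℤ)^((dotp w z).val)
      = if z = 0 then (2:ℤ)^m else 0 := by
  by_cases hz : z = 0
  · subst hz
    have : ∀ w : Fin m → ZMod 2, (-1:ℤ)^((dotp w 0).val) = 1 := by
      intro w; rw [dotp_zero_right']; rfl
    simp only [this, Finset.sum_const, Finset.card_univ]
    simp [Fintype.card_fun]
  · rw [if_neg hz]
    have : ∃ i, z i ≠ 0 := by
      by_contra hco
      push_neg at hco
      exact hz (funext hco)
    obtain ⟨i, hi⟩ := this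
    refine sum_invol_zero Finset.univ z (fun j => if i = j then 1 else 0)
      (fun w _ => Finset.mem_univ _) ?_
    rw [dotp_single_left']
    exact zmod2_ne_zero hi

lemma parseval' {m : ℕ} (f : (Fin m → ZMod 2) → ZMod 2) :
    ∑ v : Fin m → ZMod 2, (WHT f v)^2 = 2^(2*m) := by
  have step1 : ∀ v : Fin m → ZMod 2, (WHT f v)^2
      = ∑ x : Fin m → ZMod 2, ∑ y : Fin m → ZMod 2,
          ((-1:ℤ)^((f x).val) * (-1:ℤ)^((f y).val)) * (-1:ℤ)^((dotp v (x+y)).val) := by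
    intro v
    rw [sq, WHT, Finset.sum_mul_sum]
    refine Finset.sum_congr rfl fun x _ => Finset.sum_congr rfl fun y _ => ?_
    rw [neg_one_pow_add', neg_one_pow_add', dotp_add_right', neg_one_pow_add']
    ring
  rw [Finset.sum_congr rfl fun v _ => step1 v]
  rw [Finset.sum_comm]
  have step2 : ∀ x : Fin m → ZMod 2,
      (∑ v : Fin m → ZMod 2, ∑ y : Fin m → ZMod 2,
        ((-1:ℤ)^((f x).val) * (-1:ℤ)^((f y).val)) * (-1:ℤ)^((dotp v (x+y)).val))
      = 2^m := by
    intro x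
    rw [Finset.sum_comm]
    have inner : ∀ y : Fin m → ZMod 2,
        (∑ v : Fin m → ZMod 2,
          ((-1:ℤ)^((f x).val) * (-1:ℤ)^((f y).val)) * (-1:ℤ)^((dotp v (x+y)).val))
        = ((-1:ℤ)^((f x).val) * (-1:ℤ)^((f y).val)) * (if x + y = 0 then (2:ℤ)^m else 0) := by
      intro y
      rw [← Finset.mul_sum, char_sum_univ]
    rw [Finset.sum_congr rfl fun y _ => inner y]
    have hxy : ∀ y : Fin m → ZMod 2, (x + y = 0) ↔ (y = x) := by
      intro y
      constructor
      · intro hh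
        funext i
        have h2 := congrFun hh i
        revert h2
        have : ∀ a b : ZMod 2, a + b = 0 → b = a := by decide
        exact this (x i) (y i)
      · intro hh
        rw [hh]
        funext i
        have : ∀ a : ZMod 2, a + a = 0 := by decide
        exact this (x i)
    rw [Finset.sum_congr rfl fun y _ => by rw [if_congr (hxy y) rfl rfl]]
    rw [Finset.sum_eq_single x]
    · rw [if_pos rfl, ← pow_add]
      have : Even ((f x).val + (f x).val) := ⟨(f x).val, rfl⟩
      rw [this.neg_one_pow, one_mul]
    · intro y _ hy
      rw [if_neg hy, mul_zero]
    · intro hco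
      exact absurd (Finset.mem_univ x) hco
  rw [Finset.sum_congr rfl fun x _ => step2 x]
  rw [Finset.sum_const, Finset.card_univ]
  simp [Fintype.card_fun, two_mul, pow_add]

open scoped Classical in
/-- with `U ⊆ 𝔽₂^k` a subspace of dimension `τ ≤ k-2`, `a ⊕ ω·(h₁,…,h_k)`
bent on `𝔽₂^n` (dual `(a ⊕ ω·(h₁,…,h_k))*`) for every `ω ∈ U^⊥`, and
`2^(k-τ) ∣ ∑_{ω∈U^⊥} (-1)^((a ⊕ ω·(h₁,…,h_k))*(v))` for every `v`, the function
`𝔣(x) = a(x) ⊕ φ_U(h₁(x),…,h_k(x))` is bent on `𝔽₂^n`. -/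
theorem stmt16 {n k τ : ℕ} (hne : Even n) (hτ : τ + 2 ≤ k)
    (U : Submodule (ZMod 2) (Fin k → ZMod 2))
    (hdim : Module.finrank (ZMod 2) U = τ)
    (a : (Fin n → ZMod 2) → ZMod 2) (h : Fin k → (Fin n → ZMod 2) → ZMod 2)
    (gdual : (Fin k → ZMod 2) → (Fin n → ZMod 2) → ZMod 2)
    (hbent : ∀ w : Fin k → ZMod 2, (∀ u ∈ U, dotp u w = 0) →
      IsDualBent (fun x => a x + dotp w (fun i => h i x)) (gdual w))
    (hdiv : ∀ v : Fin n → ZMod 2,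
      (2 ^ (k - τ) : ℤ) ∣
        ∑ w ∈ Finset.univ.filter (fun w : Fin k → ZMod 2 => ∀ u ∈ U, dotp u w = 0),
          (-1 : ℤ) ^ ((gdual w v).val)) :
    IsBent (fun x : Fin n → ZMod 2 =>
      a x + (if (fun i => h i x) ∈ U then (1 : ZMod 2) else 0)) := by
  have hτk : τ ≤ k := by omega
  obtain ⟨t, ht⟩ := hne
  have hnt : n / 2 = t := by omega
  have key : ∀ v : Fin n → ZMod 2, ∃ c : ℤ, Odd c ∧
      WHT (fun x : Fin n → ZMod 2 =>
        a x + (if (fun i => h i x) ∈ U then (1 : ZMod 2) else 0)) v = 2 ^ t * c := by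
    intro v
    obtain ⟨q, hq⟩ := hdiv v
    have hterm : ∀ (s r : ZMod 2) (b : Prop) (inst : Decidable b),
        (-1:ℤ)^(((s + (if b then (1:ZMod 2) else 0)) + r).val)
        = (-1:ℤ)^((s+r).val) - 2 * ((-1:ℤ)^((s+r).val) * (if b then (1:ℤ) else 0)) := by
      intro s r b inst
      by_cases hb : b
      · rw [if_pos hb, if_pos hb]
        revert s r; decide
      · rw [if_neg hb, if_neg hb]
        revert s r; decide
    have hsplit : WHT (fun x : Fin n → ZMod 2 =>
        a x + (if (fun i => h i x) ∈ U then (1 : ZMod 2) else 0)) v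
        = (∑ x : Fin n → ZMod 2, (-1:ℤ)^((a x + dotp v x).val))
          - 2 * ∑ x : Fin n → ZMod 2, (-1:ℤ)^((a x + dotp v x).val)
              * (if (fun i => h i x) ∈ U then (1:ℤ) else 0) := by
      rw [WHT]
      rw [Finset.sum_congr rfl fun x _ => hterm (a x) (dotp v x) _ _]
      rw [Finset.sum_sub_distrib, ← Finset.mul_sum]
    have hmerge : ∀ s r p : ZMod 2,
        (-1:ℤ)^((s+r).val) * (-1:ℤ)^(p.val) = (-1:ℤ)^(((s+p)+r).val) := by decide
    have hB : (2:ℤ)^(k-τ) * (∑ x : Fin n → ZMod 2, (-1:ℤ)^((a x + dotp v x).val)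
            * (if (fun i => h i x) ∈ U then (1:ℤ) else 0))
        = 2^t * ∑ w ∈ Finset.univ.filter
            (fun w : Fin k → ZMod 2 => ∀ u ∈ U, dotp u w = 0),
            (-1:ℤ)^((gdual w v).val) := by
      rw [Finset.mul_sum]
      have h1 : ∀ x : Fin n → ZMod 2,
          (2:ℤ)^(k-τ) * ((-1:ℤ)^((a x + dotp v x).val)
              * (if (fun i => h i x) ∈ U then (1:ℤ) else 0))
          = ∑ w ∈ Finset.univ.filter
              (fun w : Fin k → ZMod 2 => ∀ u ∈ U, dotp u w = 0),
              (-1:ℤ)^(((a x + dotp w (fun i => h i x)) + dotp v x).val) := by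
        intro x
        have h2 : (2:ℤ)^(k-τ) * ((-1:ℤ)^((a x + dotp v x).val)
              * (if (fun i => h i x) ∈ U then (1:ℤ) else 0))
            = (-1:ℤ)^((a x + dotp v x).val)
              * (if (fun i => h i x) ∈ U then (2:ℤ)^(k-τ) else 0) := by
          by_cases hb : (fun i => h i x) ∈ U
          · rw [if_pos hb, if_pos hb]; ring
          · rw [if_neg hb, if_neg hb]; ring
        rw [h2, ← char_sum_perp U hdim hτk (fun i => h i x), Finset.mul_sum]
        refine Finset.sum_congr rfl fun w hw => ?_
        rw [hmerge]
      rw [Finset.sum_congr rfl fun x _ => h1 x, Finset.sum_comm]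
      rw [Finset.mul_sum]
      refine Finset.sum_congr rfl fun w hw => ?_
      have hwP : ∀ u ∈ U, dotp u w = 0 := (Finset.mem_filter.mp hw).2
      have hb := hbent w hwP v
      rw [Fintype.card_fin, hnt] at hb
      rw [← hb, WHT]
    have hAeq : (∑ x : Fin n → ZMod 2, (-1:ℤ)^((a x + dotp v x).val))
        = 2^t * (-1:ℤ)^((gdual 0 v).val) := by
      have hb := hbent 0 (fun u _ => dotp_zero_right' u) v
      rw [Fintype.card_fin, hnt] at hb
      rw [← hb, WHT]
      refine Finset.sum_congr rfl fun x _ => ?_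
      rw [dotp_zero_left', add_zero]
    refine ⟨(-1:ℤ)^((gdual 0 v).val) - 2 * q, ?_, ?_⟩
    · rcases Nat.even_or_odd ((gdual 0 v).val) with he | ho
      · rw [he.neg_one_pow]; exact ⟨-q, by ring⟩
      · rw [ho.neg_one_pow]; exact ⟨-q - 1, by ring⟩
    · have hcf : (2:ℤ)^(k-τ) ≠ 0 := by positivity
      apply mul_left_cancel₀ hcf
      linear_combination ((2:ℤ)^(k-τ)) * hsplit - 2 * hB
        + ((2:ℤ)^(k-τ)) * hAeq - 2 * (2:ℤ)^t * hq
  choose c hcodd hc using key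
  have hpar := parseval' (fun x : Fin n → ZMod 2 =>
    a x + (if (fun i => h i x) ∈ U then (1 : ZMod 2) else 0))
  have h2n : ((2:ℤ)^t)^2 = 2^n := by
    rw [← pow_mul]
    congr 1
    omega
  have hsum : ∑ v : Fin n → ZMod 2, (c v)^2 = 2^n := by
    have hrw : ∑ v : Fin n → ZMod 2, (WHT (fun x : Fin n → ZMod 2 =>
        a x + (if (fun i => h i x) ∈ U then (1 : ZMod 2) else 0)) v)^2
        = ∑ v : Fin n → ZMod 2, (2:ℤ)^n * (c v)^2 := by
      refine Finset.sum_congr rfl fun v _ => ?_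
      rw [hc v, mul_pow, h2n]
    rw [hrw, ← Finset.mul_sum] at hpar
    have h2 : ((2:ℤ)^(2*n)) = 2^n * 2^n := by rw [two_mul, pow_add]
    rw [h2] at hpar
    exact mul_left_cancel₀ (by positivity : ((2:ℤ)^n) ≠ 0) hpar
  have hone : ∀ v : Fin n → ZMod 2, |c v| = 1 := by
    have hge : ∀ v : Fin n → ZMod 2, 1 ≤ |c v| := by
      intro v
      refine Int.one_le_abs ?_
      intro hzero
      have := hcodd v
      rw [hzero] at this
      exact (Int.not_odd_iff_even.mpr Even.zero) this
    have hzero : ∑ v : Fin n → ZMod 2, ((c v)^2 - 1) = 0 := by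
      rw [Finset.sum_sub_distrib, hsum, Finset.sum_const, Finset.card_univ]
      simp [Fintype.card_fun]
    have hnn : ∀ v ∈ (Finset.univ : Finset (Fin n → ZMod 2)), (0:ℤ) ≤ (c v)^2 - 1 := by
      intro v _
      have h1 := hge v
      nlinarith [sq_abs (c v)]
    have hall := (Finset.sum_eq_zero_iff_of_nonneg hnn).mp hzero
    intro v
    have h1 := hall v (Finset.mem_univ v)
    have h2 : |c v| * |c v| = 1 := by
      rw [← sq, sq_abs]
      omega
    exact Int.eq_one_of_mul_eq_one_right (abs_nonneg _) h2
  intro v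
  rw [hc v, abs_mul, hone v, mul_one, abs_of_nonneg (by positivity : (0:ℤ) ≤ 2^t)]
  rw [Fintype.card_fin, hnt]
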